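/- Let S be a numerical semigroup and let x be an odd integer with 1 ≤ x ≤ 2t(S) + 1, where t(S) is the type of S. Then there exist infinitely many almost symmetric numerical semigroups T with t(T) = x such that S = {n ∈ ℕ : 2n ∈ T}, i.e. S is one half of T. -/

import Mathlib

open Set

/-- A numerical semigroup: an additive submonoid of ℕ (viewed inside ℤ)
with finite complement in ℕ. -/
def IsNumericalSemigroup (S : Set ℤ) : Prop :=
  0 ∈ S ∧ (∀ x ∈ S, ∀ y ∈ S, x + y ∈ S) ∧ (∀ x ∈ S, 0 ≤ x) ∧
    ({z : ℤ | 0 ≤ z} \ S).Finite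

/-- The Frobenius number of a set `X ⊆ ℤ`: the largest integer not in `X`. -/
noncomputable def frobNum (X : Set ℤ) : ℤ := sSup {z : ℤ | z ∉ X}

/-- The genus of a numerical semigroup: the number of gaps. -/
noncomputable def genus (S : Set ℤ) : ℕ := ({z : ℤ | 0 ≤ z} \ S).ncard

/-- `E` is an ideal of `S`: a nonempty subset of `S` closed under adding elements of `S`. -/
def IsIdealOf (S E : Set ℤ) : Prop :=
  E.Nonempty ∧ E ⊆ S ∧ ∀ e ∈ E, ∀ s ∈ S, e + s ∈ E

/-- `E` is a relative ideal of `S`. -/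
def IsRelIdealOf (S E : Set ℤ) : Prop :=
  E.Nonempty ∧ (∀ e ∈ E, ∀ s ∈ S, e + s ∈ E) ∧ ∃ s ∈ S, ∀ e ∈ E, s + e ∈ S

/-- The difference of two subsets of ℤ: `F − G = {z : z + G ⊆ F}`. -/
def setSub (F G : Set ℤ) : Set ℤ := {z : ℤ | ∀ g ∈ G, z + g ∈ F}

/-- The standard canonical ideal `K(S) = {x : f(S) − x ∉ S}`. -/
def stdCanonical (S : Set ℤ) : Set ℤ := {x : ℤ | frobNum S - x ∉ S}

/-- The maximal ideal `M(S) = S ∖ {0}`. -/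
def maxIdeal (S : Set ℤ) : Set ℤ := S \ {0}

/-- The type of a numerical semigroup: `t(S) = |(M−M) ∖ S|`. -/
noncomputable def typeNS (S : Set ℤ) : ℕ :=
  ((setSub (maxIdeal S) (maxIdeal S)) \ S).ncard

/-- The numerical duplication `S ⋈^b E = 2·S ∪ (2·E + b)`. -/
def dup (S E : Set ℤ) (b : ℤ) : Set ℤ :=
  (fun x => 2 * x) '' S ∪ (fun x => 2 * x + b) '' E

/-- The minimum of a (relative) ideal. -/
noncomputable def minE (E : Set ℤ) : ℤ := sInf E

/-- The genus of a relative ideal: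
`g(E) = |{x ∈ ℤ∖E : m(E) ≤ x ≤ f(E)}|`. -/
noncomputable def idealGenus (E : Set ℤ) : ℕ :=
  {x : ℤ | x ∉ E ∧ minE E ≤ x ∧ x ≤ frobNum E}.ncard

/-- The normalization `Ẽ = E + (f(S) − f(E))` of a (relative) ideal `E` of `S`. -/
def tilde (S E : Set ℤ) : Set ℤ := (fun e => e + (frobNum S - frobNum E)) '' E

/-- `S` is symmetric: `z ∈ S ↔ f(S) − z ∉ S`. -/
def IsSymmetric (S : Set ℤ) : Prop := ∀ z : ℤ, z ∈ S ↔ frobNum S - z ∉ S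

/-- `S` is almost symmetric: `K(S) + M(S) ⊆ M(S)`. -/
def IsAlmostSymmetric (S : Set ℤ) : Prop :=
  ∀ k ∈ stdCanonical S, ∀ m ∈ maxIdeal S, k + m ∈ maxIdeal S

namespace OneHalfAux

lemma frobNum_eq {X : Set ℤ} {a : ℤ} (ha : a ∉ X) (h : ∀ z, a < z → z ∈ X) :
    frobNum X = a := by
  have hg : IsGreatest {z : ℤ | z ∉ X} a := by
    refine ⟨ha, fun z hz => ?_⟩
    by_contra h'
    exact hz (h z (by omega))
  exact hg.csSup_eq

lemma frob_spec (S : Set ℤ) (h0 : 0 ∈ S) (hpos : ∀ x ∈ S, 0 ≤ x)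
    (hfin : ({z : ℤ | 0 ≤ z} \ S).Finite) :
    frobNum S ∉ S ∧ (∀ z, frobNum S < z → z ∈ S) ∧ (∀ z, z ∉ S → z ≤ frobNum S) := by
  obtain ⟨B, hB⟩ := hfin.bddAbove
  have hbdd : ∀ z : ℤ, z ∉ S → z ≤ max B 0 := by
    intro z hz
    rcases le_or_gt 0 z with h | h
    · exact le_trans (hB ⟨h, hz⟩) (le_max_left _ _)
    · exact le_trans (le_of_lt h) (le_max_right _ _)
  obtain ⟨g, hg1, hg2⟩ := Int.exists_greatest_of_bdd ⟨max B 0, hbdd⟩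
    ⟨-1, fun h => by have := hpos _ h; omega⟩
  have hfg : frobNum S = g :=
    frobNum_eq hg1 (fun z hz => by by_contra h'; have := hg2 z h'; omega)
  rw [hfg]
  exact ⟨hg1, fun z hz => by by_contra h'; have := hg2 z h'; omega, hg2⟩

lemma exists_up (P : Set ℤ) (hP : P.Finite) : ∀ i : ℕ, i ≤ P.ncard →
    ∃ A : Set ℤ, A ⊆ P ∧ A.Finite ∧ A.ncard = i ∧ ∀ q ∈ P, ∀ a ∈ A, a ≤ q → q ∈ A := by
  intro i
  induction i with
  | zero => exact fun _ => ⟨∅, empty_subset _, finite_empty, by simp, by simp⟩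
  | succ n ih =>
    intro hn
    obtain ⟨A, hAP, hAfin, hAcard, hAup⟩ := ih (by omega)
    have hne : (P \ A).Nonempty := by
      by_contra h
      rw [Set.not_nonempty_iff_eq_empty, Set.diff_eq_empty] at h
      have hPA : P = A := le_antisymm h hAP
      rw [hPA, hAcard] at hn
      omega
    obtain ⟨B, hB⟩ := (hP.diff : (P \ A).Finite).bddAbove
    obtain ⟨a, haPA, hamax⟩ :=
      Int.exists_greatest_of_bdd (P := fun z => z ∈ P \ A) ⟨B, fun z hz => hB hz⟩ hne
    refine ⟨insert a A, insert_subset haPA.1 hAP, hAfin.insert a, ?_, ?_⟩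
    · rw [Set.ncard_insert_of_notMem haPA.2 hAfin]; omega
    · intro q hqP a' ha' hle
      rcases Set.mem_insert_iff.1 ha' with rfl | ha'A
      · rcases em (q ∈ A) with h | h
        · exact Set.mem_insert_of_mem _ h
        · have hqa : q = a' := le_antisymm (hamax q ⟨hqP, h⟩) hle
          rw [hqa]; exact Set.mem_insert _ _
      · exact Set.mem_insert_of_mem _ (hAup q hqP a' ha'A hle)

lemma PF_sub (S : Set ℤ) (h0 : 0 ∈ S) (hadd : ∀ x ∈ S, ∀ y ∈ S, x + y ∈ S)
    (hpos : ∀ x ∈ S, 0 ≤ x) (hfin : ({z : ℤ | 0 ≤ z} \ S).Finite) :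
    setSub (maxIdeal S) (maxIdeal S) \ S ⊆ {z : ℤ | 0 ≤ z} \ S := by
  obtain ⟨hf1, hf2, hf3⟩ := frob_spec S h0 hpos hfin
  have hfm1 : -1 ≤ frobNum S := hf3 (-1) (fun h => by have := hpos _ h; omega)
  have hSne : ∃ m, m ∈ S ∧ m ≠ 0 := ⟨frobNum S + 2, hf2 _ (by omega), by omega⟩
  obtain ⟨e0, ⟨he0S, he0ne⟩, he0min⟩ :=
    Int.exists_least_of_bdd (P := fun z => z ∈ S ∧ z ≠ 0) ⟨0, fun z hz => hpos z hz.1⟩ hSne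
  intro g hg
  obtain ⟨hg1, hg2⟩ := hg
  have hmem : e0 ∈ maxIdeal S := ⟨he0S, fun h => he0ne h⟩
  have h1 : g + e0 ∈ maxIdeal S := hg1 e0 hmem
  have h2 := he0min (g + e0) ⟨h1.1, fun h => h1.2 h⟩
  have := hpos _ he0S
  refine ⟨?_, hg2⟩
  simp only [Set.mem_setOf_eq]
  omega

end OneHalfAux

namespace OneHalfAux

lemma construction (S : Set ℤ) (h0 : 0 ∈ S) (hadd : ∀ x ∈ S, ∀ y ∈ S, x + y ∈ S)
    (hpos : ∀ x ∈ S, 0 ≤ x) (hfin : ({z : ℤ | 0 ≤ z} \ S).Finite)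
    (A : Set ℤ) (hAfin : A.Finite)
    (hAPF : A ⊆ setSub (maxIdeal S) (maxIdeal S) \ S)
    (hup : ∀ q ∈ setSub (maxIdeal S) (maxIdeal S) \ S, ∀ a ∈ A, a ≤ q → q ∈ A)
    (b : ℤ) (hbodd : Odd b) (hbf : frobNum S + 2 ≤ b) (hb3 : 3 ≤ b) :
    IsNumericalSemigroup (dup S {y : ℤ | frobNum S - y ∉ S ∧ frobNum S - y ∉ A} b) ∧
    IsAlmostSymmetric (dup S {y : ℤ | frobNum S - y ∉ S ∧ frobNum S - y ∉ A} b) ∧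
    typeNS (dup S {y : ℤ | frobNum S - y ∉ S ∧ frobNum S - y ∉ A} b) = 2 * A.ncard + 1 ∧
    S = {n : ℤ | 0 ≤ n ∧ 2 * n ∈ dup S {y : ℤ | frobNum S - y ∉ S ∧ frobNum S - y ∉ A} b} ∧
    frobNum (dup S {y : ℤ | frobNum S - y ∉ S ∧ frobNum S - y ∉ A} b) = 2 * frobNum S + b := by
  obtain ⟨hfS1, hfS2, hfS3⟩ := frob_spec S h0 hpos hfin
  obtain ⟨c, hc⟩ := hbodd
  set f : ℤ := frobNum S with hfdef
  set E : Set ℤ := {y : ℤ | f - y ∉ S ∧ f - y ∉ A} with hEdef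
  set T : Set ℤ := dup S E b with hTdef
  have hfm1 : -1 ≤ f := hfS3 (-1) (fun h => by have := hpos _ h; omega)
  have hMmem : ∀ m : ℤ, m ∈ maxIdeal S ↔ m ∈ S ∧ m ≠ 0 := fun m => by
    simp [maxIdeal]
  -- least positive element
  have hSne : ∃ m, m ∈ S ∧ m ≠ 0 := ⟨f + 2, hfS2 _ (by omega), by omega⟩
  obtain ⟨e0, ⟨he0S, he0ne⟩, he0min⟩ :=
    Int.exists_least_of_bdd (P := fun z => z ∈ S ∧ z ≠ 0) ⟨0, fun z hz => hpos z hz.1⟩ hSne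
  have he0pos : 1 ≤ e0 := by have := hpos _ he0S; omega
  -- facts about elements of A
  have hAprop : ∀ a ∈ A, (1 ≤ a ∧ a ≤ f ∧ a ∉ S) ∧
      ∀ m ∈ S, m ≠ 0 → a + m ∈ S ∧ a + m ≠ 0 := by
    intro a ha
    obtain ⟨ha1, ha2⟩ := hAPF ha
    have hmm : ∀ m ∈ S, m ≠ 0 → a + m ∈ S ∧ a + m ≠ 0 := by
      intro m hm hm0
      have := ha1 m ((hMmem m).2 ⟨hm, hm0⟩)
      exact (hMmem _).1 this
    have h1 := hmm e0 he0S he0ne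
    have h2 := he0min (a + e0) h1
    have h3 : a ≤ f := hfS3 a ha2
    refine ⟨⟨?_, h3, ha2⟩, hmm⟩
    have : a ≠ 0 := fun h => ha2 (h ▸ h0)
    omega
  -- members of S ∨ A ("D")
  have hDnn : ∀ d : ℤ, (d ∈ S ∨ d ∈ A) → 0 ≤ d := by
    intro d hd
    rcases hd with h | h
    · exact hpos _ h
    · have := (hAprop d h).1.1; omega
  have hDS : ∀ d : ℤ, (d ∈ S ∨ d ∈ A) → ∀ s ∈ S, (d + s ∈ S ∨ d + s ∈ A) := by
    intro d hd s hs
    rcases hd with h | h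
    · exact Or.inl (hadd _ h _ hs)
    · rcases em (s = 0) with rfl | hs0
      · rw [add_zero]; exact Or.inr h
      · exact Or.inl ((hAprop d h).2 s hs hs0).1
  have hDD : ∀ d d' : ℤ, (d ∈ S ∨ d ∈ A) → (d' ∈ S ∨ d' ∈ A) → (d + d' ∈ S ∨ d + d' ∈ A) := by
    intro d d' hd hd'
    rcases hd' with h' | h'
    · exact hDS d hd d' h'
    · rcases hd with h | h
      · have := hDS d' (Or.inr h') d h
        rwa [add_comm d' d] at this
      · -- both in A
        have hq : d + d' ∈ setSub (maxIdeal S) (maxIdeal S) := by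
          intro m hm
          obtain ⟨hmS, hm0⟩ := (hMmem m).1 hm
          have h1 := ((hAprop d' h').2 m hmS hm0)
          have h2 := ((hAprop d h).2 (d' + m) h1.1 h1.2)
          rw [hMmem]
          constructor
          · have : d + (d' + m) = d + d' + m := by ring
            rw [← this]; exact h2.1
          · have : d + (d' + m) = d + d' + m := by ring
            rw [← this]; exact h2.2
        rcases em (d + d' ∈ S) with h2 | h2
        · exact Or.inl h2
        · refine Or.inr (hup (d + d') ⟨hq, h2⟩ d h ?_)
          have := (hAprop d' h').1.1; omega
  -- E facts
  have hEnn : ∀ y ∈ E, 0 ≤ y := by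
    intro y hy
    by_contra h
    exact hy.1 (hfS2 (f - y) (by omega))
  have hElarge : ∀ z : ℤ, f < z → z ∈ E := by
    intro z hz
    constructor
    · intro h; have := hpos _ h; omega
    · intro h; have := (hAprop _ h).1.1; omega
  have hfE : f ∉ E := by
    intro h
    apply h.1
    rw [sub_self]
    exact h0
  have hES : ∀ e ∈ E, ∀ s ∈ S, e + s ∈ E := by
    intro e he s hs
    have key : ¬ (f - (e + s) ∈ S ∨ f - (e + s) ∈ A) := by
      intro h
      have h2 := hDS _ h s hs
      have : f - (e + s) + s = f - e := by ring
      rw [this] at h2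
      rcases h2 with h2 | h2
      · exact he.1 h2
      · exact he.2 h2
    exact ⟨fun h => key (Or.inl h), fun h => key (Or.inr h)⟩
  have hDE : ∀ d : ℤ, (d ∈ S ∨ d ∈ A) → ∀ e ∈ E, d + e ∈ E := by
    intro d hd e he
    have key : ¬ (f - (d + e) ∈ S ∨ f - (d + e) ∈ A) := by
      intro h
      have h2 := hDD _ _ h hd
      have : f - (d + e) + d = f - e := by ring
      rw [this] at h2
      rcases h2 with h2 | h2
      · exact he.1 h2
      · exact he.2 h2
    exact ⟨fun h => key (Or.inl h), fun h => key (Or.inr h)⟩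
  have hdual : ∀ w : ℤ, (∀ e ∈ E, w + e ∈ E) → (w ∈ S ∨ w ∈ A) := by
    intro w hw
    by_contra hcon
    push_neg at hcon
    have he : f - w ∈ E := by
      constructor
      · rw [sub_sub_cancel]; exact hcon.1
      · rw [sub_sub_cancel]; exact hcon.2
    have h2 := hw _ he
    rw [show w + (f - w) = f from by ring] at h2
    exact hfE h2
  -- membership in T
  have hTm : ∀ z : ℤ, z ∈ T ↔ (∃ s ∈ S, 2 * s = z) ∨ (∃ e ∈ E, 2 * e + b = z) := by
    intro z
    simp [hTdef, dup]
  have hTeven : ∀ w : ℤ, 2 * w ∈ T ↔ w ∈ S := by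
    intro w
    rw [hTm]
    constructor
    · rintro (⟨s, hs, hsw⟩ | ⟨e, he, hew⟩)
      · have : s = w := by omega
        rwa [← this]
      · exfalso; omega
    · intro hw; exact Or.inl ⟨w, hw, rfl⟩
  have hTodd : ∀ w : ℤ, 2 * w + b ∈ T ↔ w ∈ E := by
    intro w
    rw [hTm]
    constructor
    · rintro (⟨s, hs, hsw⟩ | ⟨e, he, hew⟩)
      · exfalso; omega
      · have : e = w := by omega
        rwa [← this]
    · intro hw; exact Or.inr ⟨w, hw, rfl⟩
  have hMT : ∀ z : ℤ, z ∈ maxIdeal T ↔ z ∈ T ∧ z ≠ 0 := fun z => by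
    simp [maxIdeal]
  -- all sufficiently large integers are in T
  have hbig : ∀ z : ℤ, 2 * f + b < z → z ∈ T := by
    intro z hz
    rw [hTm]
    rcases Int.even_or_odd z with ⟨w, hw⟩ | ⟨w, hw⟩
    · exact Or.inl ⟨w, hfS2 w (by omega), by omega⟩
    · exact Or.inr ⟨w - c, hElarge _ (by omega), by omega⟩
  -- Part 1 : numerical semigroup
  have part1 : IsNumericalSemigroup T := by
    refine ⟨?_, ?_, ?_, ?_⟩
    · have := (hTeven 0).2 h0
      rwa [mul_zero] at this
    · intro z hz y hy
      rw [hTm] at hz hy ⊢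
      rcases hz with ⟨s, hs, hsz⟩ | ⟨e, he, hez⟩ <;>
        rcases hy with ⟨s', hs', hsy⟩ | ⟨e', he', hey⟩
      · exact Or.inl ⟨s + s', hadd _ hs _ hs', by omega⟩
      · exact Or.inr ⟨e' + s, hES _ he' _ hs, by omega⟩
      · exact Or.inr ⟨e + s', hES _ he _ hs', by omega⟩
      · refine Or.inl ⟨e + e' + b, hfS2 _ ?_, by omega⟩
        have := hEnn _ he; have := hEnn _ he'; omega
    · intro z hz
      rw [hTm] at hz
      rcases hz with ⟨s, hs, hsz⟩ | ⟨e, he, hez⟩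
      · have := hpos _ hs; omega
      · have := hEnn _ he; omega
    · apply Set.Finite.subset (Set.finite_Icc 0 (2 * f + b))
      intro z hz
      obtain ⟨hz0, hzT⟩ := hz
      simp only [Set.mem_setOf_eq] at hz0
      simp only [Set.mem_Icc]
      refine ⟨hz0, ?_⟩
      by_contra h'
      exact hzT (hbig z (by omega))
  -- frobNum T
  have hfT : frobNum T = 2 * f + b := by
    apply frobNum_eq
    · intro h
      rw [hTm] at h
      rcases h with ⟨s, hs, hsw⟩ | ⟨e, he, hew⟩
      · omega
      · have : e = f := by omega
        rw [this] at he
        exact hfE he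
    · exact hbig
  -- Part 2 : almost symmetric
  have part2 : IsAlmostSymmetric T := by
    intro k hk m' hm'
    have hk' : 2 * f + b - k ∉ T := by
      have : frobNum T - k ∉ T := hk
      rwa [hfT] at this
    rw [hMT] at hm'
    obtain ⟨hm'T, hm'0⟩ := hm'
    rw [hTm] at hm'T
    rw [hMT]
    rcases Int.even_or_odd k with ⟨y, hy⟩ | ⟨y, hy⟩
    · -- k even, k = 2y
      have hyD : y ∈ S ∨ y ∈ A := by
        by_contra hcon
        push_neg at hcon
        apply hk'
        have heq : 2 * f + b - k = 2 * (f - y) + b := by omega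
        rw [heq, hTodd]
        exact ⟨by rw [sub_sub_cancel]; exact hcon.1, by rw [sub_sub_cancel]; exact hcon.2⟩
      rcases hm'T with ⟨m, hm, hmz⟩ | ⟨e, he, hez⟩
      · have hm0 : m ≠ 0 := by omega
        have hym : y + m ∈ S ∧ y + m ≠ 0 := by
          rcases hyD with h | h
          · have := hpos _ h
            exact ⟨hadd _ h _ hm, by have := hpos _ hm; omega⟩
          · exact (hAprop _ h).2 m hm hm0
        constructor
        · rw [show k + m' = 2 * (y + m) from by omega, hTeven]
          exact hym.1
        · omega
      · have hye : y + e ∈ E := hDE y hyD e he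
        constructor
        · rw [show k + m' = 2 * (y + e) + b from by omega, hTodd]
          exact hye
        · omega
    · -- k odd: k = 2(y-c) + b
      have hK : f - (y - c) ∉ S := by
        intro h
        apply hk'
        rw [show 2 * f + b - k = 2 * (f - (y - c)) from by omega, hTeven]
        exact h
      have hynn : 0 ≤ y - c := by
        by_contra h
        exact hK (hfS2 _ (by omega))
      rcases hm'T with ⟨m, hm, hmz⟩ | ⟨e, he, hez⟩
      · have hm0 : m ≠ 0 := by omega
        have hme : (y - c) + m ∈ E := by
          constructor
          · intro h
            have h2 := hadd _ h _ hm
            rw [show f - (y - c + m) + m = f - (y - c) from by ring] at h2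
            exact hK h2
          · intro h
            have h2 := ((hAprop _ h).2 m hm hm0).1
            rw [show f - (y - c + m) + m = f - (y - c) from by ring] at h2
            exact hK h2
        constructor
        · rw [show k + m' = 2 * ((y - c) + m) + b from by omega, hTodd]
          exact hme
        · omega
      · have henn := hEnn _ he
        constructor
        · rw [show k + m' = 2 * ((y - c) + e + b) from by omega, hTeven]
          exact hfS2 _ (by omega)
        · omega
  -- Part 3 : the type
  have hX : setSub (maxIdeal T) (maxIdeal T) \ T =
      ((fun a => 2 * a) '' A) ∪
        ((fun w => 2 * w + b) '' (insert f ((fun a => f - a) '' A))) := by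
    ext z
    constructor
    · rintro ⟨hz1, hz2⟩
      simp only [setSub, Set.mem_setOf_eq] at hz1
      rcases Int.even_or_odd z with ⟨w, hw⟩ | ⟨w, hw⟩
      · -- z even
        left
        have hwS : w ∉ S := by
          intro h
          exact hz2 (by rw [show z = 2 * w from by omega, hTeven]; exact h)
        have hwE : ∀ e ∈ E, w + e ∈ E := by
          intro e he
          have hmem : 2 * e + b ∈ maxIdeal T := by
            rw [hMT]
            exact ⟨(hTodd e).2 he, by omega⟩
          have h2 := hz1 _ hmem
          rw [hMT] at h2
          have h3 := h2.1
          rw [show z + (2 * e + b) = 2 * (w + e) + b from by omega, hTodd] at h3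
          exact h3
        rcases hdual w hwE with h | h
        · exact absurd h hwS
        · exact ⟨w, h, show 2 * w = z by omega⟩
      · -- z odd, z = 2(w-c)+b
        right
        have hwE : w - c ∉ E := by
          intro h
          exact hz2 (by rw [show z = 2 * (w - c) + b from by omega, hTodd]; exact h)
        have hwME : ∀ m ∈ S, m ≠ 0 → (w - c) + m ∈ E := by
          intro m hm hm0
          have hmem : 2 * m ∈ maxIdeal T := by
            rw [hMT]
            exact ⟨(hTeven m).2 hm, by have := hpos _ hm; omega⟩
          have h2 := hz1 _ hmem
          rw [hMT] at h2
          have h3 := h2.1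
          rw [show z + 2 * m = 2 * ((w - c) + m) + b from by omega, hTodd] at h3
          exact h3
        have hD : f - (w - c) ∈ S ∨ f - (w - c) ∈ A := by
          by_contra hcon
          push_neg at hcon
          exact hwE ⟨hcon.1, hcon.2⟩
        rcases hD with h | h
        · have hzero : f - (w - c) = 0 := by
            by_contra hne
            have h2 := hwME _ h hne
            rw [show w - c + (f - (w - c)) = f from by ring] at h2
            exact hfE h2
          exact ⟨w - c, Set.mem_insert_iff.2 (Or.inl (by omega)), show 2 * (w - c) + b = z by omega⟩
        · exact ⟨w - c, Set.mem_insert_iff.2 (Or.inr ⟨f - (w - c), h, by ring⟩), show 2 * (w - c) + b = z by omega⟩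
    · intro hz
      rcases hz with ⟨a, haA, haz⟩ | ⟨w, hw, hwz⟩
      · -- z = 2a, a ∈ A
        simp only at haz
        obtain ⟨⟨ha1, ha2, ha3⟩, ha4⟩ := hAprop a haA
        constructor
        · intro u hu
          rw [hMT] at hu ⊢
          obtain ⟨huT, hu0⟩ := hu
          rw [hTm] at huT
          rcases huT with ⟨m, hm, hmu⟩ | ⟨e, he, heu⟩
          · have hm0 : m ≠ 0 := by omega
            have h2 := ha4 m hm hm0
            constructor
            · rw [show z + u = 2 * (a + m) from by omega, hTeven]
              exact h2.1
            · omega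
          · have h2 : a + e ∈ E := hDE a (Or.inr haA) e he
            constructor
            · rw [show z + u = 2 * (a + e) + b from by omega, hTodd]
              exact h2
            · omega
        · intro h
          rw [show z = 2 * a from by omega, hTeven] at h
          exact ha3 h
      · -- z = 2w + b with w ∈ insert f ((f - ·) '' A)
        simp only at hwz
        have hwz' : 2 * w + b = z := hwz
        rcases Set.mem_insert_iff.1 hw with rfl | ⟨a, haA, haw⟩
        · -- w = f
          constructor
          · intro u hu
            rw [hMT] at hu ⊢
            obtain ⟨huT, hu0⟩ := hu
            rw [hTm] at huT
            rcases huT with ⟨m, hm, hmu⟩ | ⟨e, he, heu⟩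
            · have hm0 : 1 ≤ m := by have := hpos _ hm; omega
              have hfm : f + m ∈ E := by
                constructor
                · intro h; have := hpos _ h; omega
                · intro h; have := (hAprop _ h).1.1; omega
              constructor
              · rw [show z + u = 2 * (f + m) + b from by omega, hTodd]
                exact hfm
              · omega
            · have henn := hEnn _ he
              constructor
              · rw [show z + u = 2 * (f + e + b) from by omega, hTeven]
                exact hfS2 _ (by omega)
              · omega
          · intro h
            rw [show z = 2 * f + b from by omega, hTodd] at h
            exact hfE h
        · -- w = f - a
          have haw' : f - a = w := haw
          obtain ⟨⟨ha1, ha2, ha3⟩, ha4⟩ := hAprop a haA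
          constructor
          · intro u hu
            rw [hMT] at hu ⊢
            obtain ⟨huT, hu0⟩ := hu
            rw [hTm] at huT
            rcases huT with ⟨m, hm, hmu⟩ | ⟨e, he, heu⟩
            · have hm0 : m ≠ 0 := by omega
              have hfm : (f - a) + m ∈ E := by
                constructor
                · intro h
                  have h2 := hadd _ h _ hm
                  rw [show f - (f - a + m) + m = a from by ring] at h2
                  exact ha3 h2
                · intro h
                  have h2 := ((hAprop _ h).2 m hm hm0).1
                  rw [show f - (f - a + m) + m = a from by ring] at h2
                  exact ha3 h2
              constructor
              · rw [show z + u = 2 * ((f - a) + m) + b from by omega, hTodd]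
                exact hfm
              · omega
            · have henn := hEnn _ he
              constructor
              · rw [show z + u = 2 * ((f - a) + e + b) from by omega, hTeven]
                exact hfS2 _ (by omega)
              · omega
          · intro h
            rw [show z = 2 * (f - a) + b from by omega, hTodd] at h
            apply h.2
            rw [sub_sub_cancel]
            exact haA
  have part3 : typeNS T = 2 * A.ncard + 1 := by
    have hinj1 : Function.Injective (fun a : ℤ => 2 * a) := by
      intro a b h; dsimp at h; omega
    have hinj2 : Function.Injective (fun w : ℤ => 2 * w + b) := by
      intro a b h; dsimp at h; omega
    have hinj3 : Function.Injective (fun a : ℤ => f - a) := by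
      intro a b h; dsimp at h; omega
    have hfin2 : ((fun a : ℤ => f - a) '' A).Finite := hAfin.image _
    have hfnotmem : f ∉ (fun a : ℤ => f - a) '' A := by
      rintro ⟨a, haA, ha⟩
      simp only at ha
      have := (hAprop a haA).1.1
      omega
    have hdisj : Disjoint ((fun a : ℤ => 2 * a) '' A)
        ((fun w : ℤ => 2 * w + b) '' (insert f ((fun a : ℤ => f - a) '' A))) := by
      rw [Set.disjoint_left]
      rintro z ⟨a, _, ha⟩ ⟨w, _, hw⟩
      simp only at ha hw
      omega
    unfold typeNS
    rw [hX, Set.ncard_union_eq hdisj (hAfin.image _) ((hfin2.insert f).image _)]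
    rw [Set.ncard_image_of_injective _ hinj1, Set.ncard_image_of_injective _ hinj2]
    rw [Set.ncard_insert_of_notMem hfnotmem hfin2]
    rw [Set.ncard_image_of_injective _ hinj3]
    omega
  have part4 : S = {n : ℤ | 0 ≤ n ∧ 2 * n ∈ T} := by
    ext n
    constructor
    · intro h
      exact ⟨hpos _ h, (hTeven n).2 h⟩
    · intro h
      exact (hTeven n).1 h.2
  exact ⟨part1, part2, part3, part4, hfT⟩

end OneHalfAux

/-- Every numerical semigroup `S` is one half of infinitely many almost
symmetric numerical semigroups of any prescribed odd type `x ≤ 2t(S) + 1`. -/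
theorem one_half_of_infinitely_many_almost_symmetric
    (S : Set ℤ) (hS : IsNumericalSemigroup S)
    (x : ℕ) (hx : Odd x) (hx1 : 1 ≤ x) (hx2 : x ≤ 2 * typeNS S + 1) :
    {T : Set ℤ | IsNumericalSemigroup T ∧ IsAlmostSymmetric T ∧ typeNS T = x ∧
      S = {n : ℤ | 0 ≤ n ∧ 2 * n ∈ T}}.Infinite := by
  obtain ⟨h0, hadd, hpos, hfin⟩ := hS
  obtain ⟨i, hi⟩ := hx
  have hPFfin : (setSub (maxIdeal S) (maxIdeal S) \ S).Finite :=
    hfin.subset (OneHalfAux.PF_sub S h0 hadd hpos hfin)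
  have hicard : i ≤ (setSub (maxIdeal S) (maxIdeal S) \ S).ncard := by
    have ht : typeNS S = (setSub (maxIdeal S) (maxIdeal S) \ S).ncard := rfl
    omega
  obtain ⟨A, hAsub, hAfin, hAcard, hup⟩ := OneHalfAux.exists_up _ hPFfin i hicard
  have hfa : frobNum S ≤ ((frobNum S).natAbs : ℤ) := Int.le_natAbs
  have hcons := fun n : ℕ => OneHalfAux.construction S h0 hadd hpos hfin A hAfin hAsub hup
      (2 * (n : ℤ) + 2 * ((frobNum S).natAbs : ℤ) + 3)
      ⟨(n : ℤ) + ((frobNum S).natAbs : ℤ) + 1, by ring⟩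
      (by omega) (by omega)
  refine Set.infinite_of_injective_forall_mem
    (f := fun n : ℕ => dup S {y : ℤ | frobNum S - y ∉ S ∧ frobNum S - y ∉ A}
      (2 * (n : ℤ) + 2 * ((frobNum S).natAbs : ℤ) + 3)) ?_ ?_
  · intro n m hnm
    have h1 := (hcons n).2.2.2.2
    have h2 := (hcons m).2.2.2.2
    simp only at hnm
    rw [hnm, h2] at h1
    omega
  · intro n
    obtain ⟨p1, p2, p3, p4, _⟩ := hcons n
    exact ⟨p1, p2, by rw [p3, hAcard]; omega, p4⟩
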